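/- Let U ⊆ H_SR be the image of the subring of ℂ[N,Σ] generated by [v_1],…,[v_n] (the untwisted sector), and for each v ∈ Box(Σ) let H_v be the U-submodule of H_SR generated by the class of [v]. Then H_SR is the internal direct sum ⊕_{v∈Box(Σ)} H_v of the U-submodules H_v: the H_v span H_SR and are ℂ-linearly independent. -/

import Mathlib

open scoped TensorProduct

noncomputable section

namespace ToricStack

/-- The real vector corresponding to an integral lattice point. -/
def toR {d : ℕ} (w : Fin d → ℤ) : Fin d → ℝ := fun j => (w j : ℝ)

/-- The rational vector corresponding to an integral lattice point. -/
def toQ {d : ℕ} (w : Fin d → ℤ) : Fin d → ℚ := fun j => (w j : ℚ)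

/-- cone(S) = nonnegative real span of the `v i`, `i ∈ S`. -/
def cone {d n : ℕ} (v : Fin n → Fin d → ℤ) (S : Finset (Fin n)) : Set (Fin d → ℝ) :=
  {x | ∃ a : Fin n → ℝ, (∀ i, 0 ≤ a i) ∧ (∀ i ∉ S, a i = 0) ∧ x = ∑ i, a i • toR (v i)}

/-- Axioms for the combinatorial data `(v, 𝒮)` encoding a simplicial fan in `ℤ^d` together with
a chosen lattice point on each ray (a reduced stacky fan): `𝒮` contains the empty set and all
singletons, is downward closed, and each `S ∈ 𝒮` indexes an `ℝ`-linearly independent family;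
moreover cones intersect along common faces. -/
def IsStackyFan {d n : ℕ} (v : Fin n → Fin d → ℤ) (𝒮 : Finset (Finset (Fin n))) : Prop :=
  (∀ i, v i ≠ 0) ∧
  (∅ ∈ 𝒮) ∧
  (∀ i, ({i} : Finset (Fin n)) ∈ 𝒮) ∧
  (∀ S ∈ 𝒮, ∀ S' ⊆ S, S' ∈ 𝒮) ∧
  (∀ S ∈ 𝒮, LinearIndependent ℝ (fun i : {i // i ∈ S} => toR (v i))) ∧
  (∀ S ∈ 𝒮, ∀ S' ∈ 𝒮, cone v S ∩ cone v S' = cone v (S ∩ S'))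

/-- Lattice points of the support `|Σ|` of the fan. -/
def suppL {d n : ℕ} (v : Fin n → Fin d → ℤ) (𝒮 : Finset (Finset (Fin n))) :
    Set (Fin d → ℤ) :=
  {w | ∃ S ∈ 𝒮, toR w ∈ cone v S}

/-- Nondegeneracy: the `v i` span `ℚ^d` over `ℚ`. -/
def Nondegenerate {d n : ℕ} (v : Fin n → Fin d → ℤ) : Prop :=
  Submodule.span ℚ (Set.range fun i => toQ (v i)) = ⊤

/-- `w = ∑_{i∈S} α_i v_i` with rational `α_i ∈ [0,1)` supported on `S ∈ 𝒮`,
i.e. a witness that `w ∈ Box(S)`. -/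
def IsBoxRep {d n : ℕ} (v : Fin n → Fin d → ℤ) (𝒮 : Finset (Finset (Fin n)))
    (w : Fin d → ℤ) (S : Finset (Fin n)) (α : Fin n → ℚ) : Prop :=
  S ∈ 𝒮 ∧ (∀ i, 0 ≤ α i ∧ α i < 1) ∧ (∀ i ∉ S, α i = 0) ∧
  (∀ j, (w j : ℚ) = ∑ i, α i * (v i j : ℚ))

/-- `Box(Σ) = ⋃_{S ∈ 𝒮} Box(S)`. -/
def Box {d n : ℕ} (v : Fin n → Fin d → ℤ) (𝒮 : Finset (Finset (Fin n))) :
    Set (Fin d → ℤ) :=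
  {w | ∃ S α, IsBoxRep v 𝒮 w S α}

/-- `S` is (the index set of) the minimal cone of `Σ` containing `w`. -/
def IsMinimalCone {d n : ℕ} (v : Fin n → Fin d → ℤ) (𝒮 : Finset (Finset (Fin n)))
    (w : Fin d → ℤ) (S : Finset (Fin n)) : Prop :=
  S ∈ 𝒮 ∧ toR w ∈ cone v S ∧ ∀ S' ∈ 𝒮, toR w ∈ cone v S' → S ⊆ S'

/-- The point `y(v) ∈ (ℂ^×)^n`: `y(v)_i = exp(2π√-1·α_i)` (which is `1` off the support
of `α`). -/
def yOf {n : ℕ} (α : Fin n → ℚ) : Fin n → ℂ :=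
  fun i => Complex.exp (2 * Real.pi * Complex.I * (α i : ℂ))

/-- The Laurent polynomial ring `ℤ[x_1^{±1},…,x_n^{±1}]`, as the group algebra of `ℤ^n`. -/
abbrev Laur (n : ℕ) := AddMonoidAlgebra ℤ (Fin n →₀ ℤ)

/-- The Laurent variable `x_i`. -/
def lX {n : ℕ} (i : Fin n) : Laur n := AddMonoidAlgebra.single (Finsupp.single i 1) 1

/-- The Laurent monomial `∏_i x_i^{e i}`. -/
def lMon {n : ℕ} (e : Fin n → ℤ) : Laur n :=
  AddMonoidAlgebra.single (Finsupp.equivFunOnFinite.symm e) 1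

/-- The defining relations of the ring `B`: `∏_i x_i^{f(v_i)} − 1` for all linear
`f : ℤ^d → ℤ`, and `∏_{i∈I} (1 − x_i)` for all `I ∉ 𝒮`. -/
def Brels {d n : ℕ} (v : Fin n → Fin d → ℤ) (𝒮 : Finset (Finset (Fin n))) : Set (Laur n) :=
  {x | ∃ f : (Fin d → ℤ) →ₗ[ℤ] ℤ, x = lMon (fun i => f (v i)) - 1} ∪
  {x | ∃ I : Finset (Fin n), I ∉ 𝒮 ∧ x = ∏ i ∈ I, (1 - lX i)}

/-- The ring `B`. -/
abbrev Bring {d n : ℕ} (v : Fin n → Fin d → ℤ) (𝒮 : Finset (Finset (Fin n))) :=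
  Laur n ⧸ Ideal.span (Brels v 𝒮)

/-- `B_ℂ = B ⊗_ℤ ℂ`. -/
abbrev Bc {d n : ℕ} (v : Fin n → Fin d → ℤ) (𝒮 : Finset (Finset (Fin n))) :=
  ℂ ⊗[ℤ] Bring v 𝒮

/-- The class of `x_i` in `B_ℂ`. -/
def xcl {d n : ℕ} (v : Fin n → Fin d → ℤ) (𝒮 : Finset (Finset (Fin n))) (i : Fin n) :
    Bc v 𝒮 :=
  (1 : ℂ) ⊗ₜ[ℤ] (Ideal.Quotient.mk (Ideal.span (Brels v 𝒮)) (lX i))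

/-- The data of the partial semigroup ring `ℂ[N,Σ]`: a commutative `ℂ`-algebra `A`
with basis `[w]` indexed by the lattice points `w` of `|Σ|`, unit `[0]`, and
multiplication `[w₁]·[w₂] = [w₁+w₂]` if `w₁, w₂` lie in a common cone and `0` otherwise. -/
structure PSRData {d n : ℕ} (v : Fin n → Fin d → ℤ) (𝒮 : Finset (Finset (Fin n)))
    (A : Type) [CommRing A] [Algebra ℂ A] where
  e : (Fin d → ℤ) → A
  indep : LinearIndependent ℂ (fun w : suppL v 𝒮 => e w)
  spans : Submodule.span ℂ (e '' suppL v 𝒮) = ⊤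
  one : e 0 = 1
  mul_of_cone : ∀ w₁ ∈ suppL v 𝒮, ∀ w₂ ∈ suppL v 𝒮,
      (∃ S ∈ 𝒮, toR w₁ ∈ cone v S ∧ toR w₂ ∈ cone v S) → e w₁ * e w₂ = e (w₁ + w₂)
  mul_of_not_cone : ∀ w₁ ∈ suppL v 𝒮, ∀ w₂ ∈ suppL v 𝒮,
      (¬ ∃ S ∈ 𝒮, toR w₁ ∈ cone v S ∧ toR w₂ ∈ cone v S) → e w₁ * e w₂ = 0

/-- The ideal `⟨t_1,…,t_d⟩ ⊆ ℂ[N,Σ]`, where `t_j = ∑_i f_j(v_i)·[v_i]` for the coordinate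
functions `f_j`. -/
def tIdeal {d n : ℕ} (v : Fin n → Fin d → ℤ) {A : Type} [CommRing A] [Algebra ℂ A]
    (e : (Fin d → ℤ) → A) : Ideal A :=
  Ideal.span (Set.range fun j : Fin d => ∑ i, ((v i j : ℂ)) • e (v i))

/-- The SR-cohomology ring `H_SR = ℂ[N,Σ]/⟨t_1,…,t_d⟩`. -/
abbrev HSR {d n : ℕ} (v : Fin n → Fin d → ℤ) (A : Type) [CommRing A] [Algebra ℂ A]
    (e : (Fin d → ℤ) → A) := A ⧸ tIdeal v e

/-- The index set `L_v` of rays `j` in the link of the cone `S_v`. -/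
abbrev LinkIdx {n : ℕ} (𝒮 : Finset (Finset (Fin n))) (Sv : Finset (Fin n)) : Type :=
  {j : Fin n // j ∉ Sv ∧ insert j Sv ∈ 𝒮}

/-- The defining relations of the ring `P_v`: monomials `∏_{j∈J} z_j` for `J ⊆ L_v` with
`S_v ∪ J ∉ 𝒮`, and linear forms `∑_{j∈L_v} f(v_j) z_j` for `ℚ`-linear `f` vanishing
on the `v_i`, `i ∈ S_v`. -/
def Prels {d n : ℕ} (v : Fin n → Fin d → ℤ) (𝒮 : Finset (Finset (Fin n)))
    (Sv : Finset (Fin n)) : Set (MvPolynomial (LinkIdx 𝒮 Sv) ℂ) :=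
  {p | ∃ J : Finset (LinkIdx 𝒮 Sv), (Sv ∪ J.image Subtype.val) ∉ 𝒮 ∧
        p = ∏ j ∈ J, MvPolynomial.X j} ∪
  {p | ∃ f : (Fin d → ℚ) →ₗ[ℚ] ℚ, (∀ i ∈ Sv, f (toQ (v i)) = 0) ∧
        p = ∑ j : LinkIdx 𝒮 Sv, MvPolynomial.C ((f (toQ (v (j : Fin n))) : ℂ)) * MvPolynomial.X j}

/-- The ring `P_v` (the Stanley–Reisner presentation of the cohomology of the closed toric
subvariety corresponding to the minimal cone containing `v`). -/
abbrev Pring {d n : ℕ} (v : Fin n → Fin d → ℤ) (𝒮 : Finset (Finset (Fin n)))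
    (Sv : Finset (Fin n)) := MvPolynomial (LinkIdx 𝒮 Sv) ℂ ⧸ Ideal.span (Prels v 𝒮 Sv)

/-- The untwisted sector: the image in `H_SR` of the subring of `ℂ[N,Σ]` generated by
`[v_1], …, [v_n]`. -/
def untwisted {d n : ℕ} (v : Fin n → Fin d → ℤ) {A : Type} [CommRing A] [Algebra ℂ A]
    (e : (Fin d → ℤ) → A) : Subalgebra ℂ (HSR v A e) :=
  Algebra.adjoin ℂ (Set.range fun i : Fin n => Ideal.Quotient.mk (tIdeal v e) (e (v i)))

/-- The sector `H_w`: the `U`-submodule of `H_SR` generated by the class of `[w]`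
(as a `ℂ`-subspace, the span of `U·[w]`). -/
def sector {d n : ℕ} (v : Fin n → Fin d → ℤ) {A : Type} [CommRing A] [Algebra ℂ A]
    (e : (Fin d → ℤ) → A) (w : Fin d → ℤ) : Submodule ℂ (HSR v A e) :=
  Submodule.span ℂ
    {x : HSR v A e | ∃ u ∈ untwisted v e, x = u * Ideal.Quotient.mk (tIdeal v e) (e w)}

/-! ### auxiliary -/

variable {d n : ℕ} {v : Fin n → Fin d → ℤ} {𝒮 : Finset (Finset (Fin n))}

/-- Coordinatewise rational representation. -/
def QRep (v : Fin n → Fin d → ℤ) (w : Fin d → ℤ) (α : Fin n → ℚ) : Prop :=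
  ∀ j, (w j : ℚ) = ∑ i, α i * (v i j : ℚ)

lemma mem_cone_of {S : Finset (Fin n)} {w : Fin d → ℤ} (a : Fin n → ℝ)
    (h0 : ∀ i, 0 ≤ a i) (hs : ∀ i ∉ S, a i = 0)
    (hw : ∀ j, (w j : ℝ) = ∑ i, a i * (v i j : ℝ)) : toR w ∈ cone v S := by
  refine ⟨a, h0, hs, ?_⟩
  funext j
  rw [Finset.sum_apply]
  simpa [toR] using hw j

lemma of_mem_cone {S : Finset (Fin n)} {w : Fin d → ℤ} (h : toR w ∈ cone v S) :
    ∃ a : Fin n → ℝ, (∀ i, 0 ≤ a i) ∧ (∀ i ∉ S, a i = 0) ∧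
      ∀ j, (w j : ℝ) = ∑ i, a i * (v i j : ℝ) := by
  obtain ⟨a, h0, hs, hx⟩ := h
  refine ⟨a, h0, hs, fun j => ?_⟩
  have := congrFun hx j
  simpa [toR] using this

lemma QRep.coords_real {w : Fin d → ℤ} {α : Fin n → ℚ} (h : QRep v w α) :
    ∀ j, (w j : ℝ) = ∑ i, (α i : ℝ) * (v i j : ℝ) := by
  intro j
  have h1 := h j
  have h2 : ((w j : ℚ) : ℝ) = ((∑ i, α i * (v i j : ℚ) : ℚ) : ℝ) := by rw [h1]
  push_cast at h2
  exact_mod_cast h2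

lemma QRep.mem_cone {w : Fin d → ℤ} {α : Fin n → ℚ} (h : QRep v w α)
    {S : Finset (Fin n)} (h0 : ∀ i, 0 ≤ α i) (hs : ∀ i ∉ S, α i = 0) :
    toR w ∈ cone v S := by
  refine mem_cone_of (fun i => (α i : ℝ)) ?_ ?_ h.coords_real
  · intro i
    show (0:ℝ) ≤ (α i : ℝ)
    exact_mod_cast h0 i
  · intro i hi
    show (α i : ℝ) = 0
    exact_mod_cast hs i hi

/-- `v` is injective on members of a cone index set. -/
lemma v_inj_on (hfan : IsStackyFan v 𝒮) {S : Finset (Fin n)} (hS : S ∈ 𝒮) :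
    ∀ i ∈ S, ∀ i' ∈ S, toQ (v i) = toQ (v i') → i = i' := by
  intro i hi i' hi' h
  have hR : toR (v i) = toR (v i') := by
    funext j
    have := congrFun h j
    simp only [toQ] at this
    simp only [toR]
    exact_mod_cast this
  have := (hfan.2.2.2.2.1 S hS).injective (a₁ := ⟨i, hi⟩) (a₂ := ⟨i', hi'⟩) hR
  exact congrArg Subtype.val this

/-- Rationality of cone coordinates. -/
lemma exists_rat_rep (hfan : IsStackyFan v 𝒮) {S : Finset (Fin n)} (hS : S ∈ 𝒮)
    {w : Fin d → ℤ} {a : Fin n → ℝ} (hsupp : ∀ i ∉ S, a i = 0)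
    (hw : ∀ j, (w j : ℝ) = ∑ i, a i * (v i j : ℝ)) :
    ∃ α : Fin n → ℚ, (∀ i, (α i : ℝ) = a i) ∧ QRep v w α := by
  classical
  -- the ℚ-linear cast map
  let toRQ : (Fin d → ℚ) →ₗ[ℚ] (Fin d → ℝ) :=
    { toFun := fun x j => (x j : ℝ)
      map_add' := by intro x y; funext j; push_cast; simp
      map_smul' := by
        intro q x; funext j
        show ((q * x j : ℚ) : ℝ) = q • ((x j : ℝ))
        rw [Rat.smul_def]
        push_cast; ring }
  have htoRQ_toQ : ∀ u : Fin d → ℤ, toRQ (toQ u) = toR u := by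
    intro u; funext j; simp [toRQ, toQ, toR]
  set φ : Fin n → (Fin d → ℚ) := fun i => toQ (v i) with hφ
  -- ℚ-linear independence of the φ i, i ∈ S
  have hliS := hfan.2.2.2.2.1 S hS
  have hliQ : LinearIndependent ℚ (fun i : {i // i ∈ S} => φ (i : Fin n)) := by
    rw [Fintype.linearIndependent_iff]
    intro g hg i
    have hcast : ∑ i₀ : {i // i ∈ S}, ((g i₀ : ℝ)) • toR (v (i₀ : Fin n)) = 0 := by
      have := congrArg toRQ hg
      rw [map_sum, map_zero] at this
      simpa [hφ, htoRQ_toQ, algebraMap_smul, Rat.cast_smul_eq_qsmul] using this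
    have := (Fintype.linearIndependent_iff.1 hliS) (fun i₀ => (g i₀ : ℝ)) hcast i
    exact_mod_cast this
  set s : Set (Fin d → ℚ) := Set.range (fun i : {i // i ∈ S} => φ (i : Fin n)) with hs
  have hsli : LinearIndepOn ℚ id s := hliQ.linearIndepOn_id
  let ext : Set (Fin d → ℚ) := LinearIndepOn.extend hsli (Set.subset_univ s)
  have hsub : s ⊆ ext := LinearIndepOn.subset_extend hsli _
  let B : Module.Basis ext ℚ (Fin d → ℚ) := Module.Basis.extend hsli
  haveI : Fintype ext := FiniteDimensional.fintypeBasisIndex B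
  have hcard : Fintype.card ext = d := by
    have := Module.finrank_eq_card_basis B
    rw [Module.finrank_fin_fun] at this
    omega
  -- the real family
  set F : ext → (Fin d → ℝ) := fun u => toRQ (u : Fin d → ℚ) with hF
  have hFspan : ⊤ ≤ Submodule.span ℝ (Set.range F) := by
    have hQ : ∀ y : Fin d → ℚ, toRQ y ∈ Submodule.span ℝ (Set.range F) := by
      intro y
      have h1 : y ∈ Submodule.span ℚ (Set.range (B : ext → (Fin d → ℚ))) := by
        rw [B.span_eq]; trivial
      have h2 : Set.range (B : ext → (Fin d → ℚ)) = ext := by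
        ext u; constructor
        · rintro ⟨x, rfl⟩; rw [Module.Basis.extend_apply_self]; exact x.2
        · intro hu; exact ⟨⟨u, hu⟩, Module.Basis.extend_apply_self _ _⟩
      rw [h2] at h1
      have h3 : toRQ y ∈ Submodule.map toRQ (Submodule.span ℚ ext) :=
        Submodule.mem_map_of_mem h1
      rw [Submodule.map_span] at h3
      have h4 : (toRQ '' ext : Set (Fin d → ℝ)) = Set.range F := (Set.image_eq_range _ _)
      rw [h4] at h3
      exact Submodule.span_subset_span ℚ ℝ _ h3
    intro x _
    have : x = ∑ j, x j • (fun j' => if j = j' then (1:ℝ) else 0) := by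
      exact pi_eq_sum_univ x
    rw [this]
    refine Submodule.sum_mem _ fun j _ => Submodule.smul_mem _ _ ?_
    have : (fun j' => if j = j' then (1:ℝ) else 0) =
        toRQ (fun j' => if j = j' then (1:ℚ) else 0) := by
      funext j'; by_cases h : j = j' <;> simp [toRQ, h]
    rw [this]; exact hQ _
  have hFli : LinearIndependent ℝ F :=
    linearIndependent_of_top_le_span_of_card_eq_finrank hFspan
      (by rw [hcard, Module.finrank_fin_fun])
  -- coefficient functions
  set c : ext → ℚ := fun u => B.repr (toQ w) u with hc
  set a' : (Fin d → ℚ) → ℝ := fun u => if h : ∃ i, i ∈ S ∧ φ i = u then a h.choose else 0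
    with ha'
  have ha'φ : ∀ i ∈ S, a' (φ i) = a i := by
    intro i hi
    have hex : ∃ i', i' ∈ S ∧ φ i' = φ i := ⟨i, hi, rfl⟩
    simp only [ha', dif_pos hex]
    have h1 := hex.choose_spec
    have := v_inj_on hfan hS _ h1.1 _ hi h1.2
    rw [this]
  have ha'0 : ∀ u : Fin d → ℚ, u ∉ s → a' u = 0 := by
    intro u hu
    simp only [ha']
    rw [dif_neg]
    rintro ⟨i, hi, hiu⟩
    exact hu ⟨⟨i, hi⟩, hiu⟩
  -- the two sums
  set ψ : {i // i ∈ S} → ext := fun i => ⟨φ (i : Fin n), hsub ⟨i, rfl⟩⟩ with hψ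
  have hψinj : Function.Injective ψ := by
    intro i i' h
    have : φ (i : Fin n) = φ (i' : Fin n) := congrArg Subtype.val h
    exact Subtype.ext (v_inj_on hfan hS _ i.2 _ i'.2 this)
  have hsum1 : ∑ u : ext, ((c u : ℝ)) • F u = toR w := by
    have : ∑ u : ext, ((c u : ℝ)) • F u = toRQ (∑ u : ext, c u • (u : Fin d → ℚ)) := by
      rw [map_sum]
      refine Finset.sum_congr rfl fun u _ => ?_
      rw [map_smul]
      funext j
      simp [F, Rat.smul_def, toRQ]
    rw [this]
    have : ∑ u : ext, c u • (u : Fin d → ℚ) = toQ w := by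
      have := B.sum_repr (toQ w)
      calc ∑ u : ext, c u • (u : Fin d → ℚ)
          = ∑ u : ext, B.repr (toQ w) u • B u := by
            refine Finset.sum_congr rfl fun u _ => ?_
            rw [Module.Basis.extend_apply_self]
        _ = toQ w := B.sum_repr (toQ w)
    rw [this, htoRQ_toQ]
  have hsum2 : ∑ u : ext, a' (u : Fin d → ℚ) • F u = toR w := by
    have himg : ∀ u : ext, u ∉ Finset.univ.image ψ → a' (u : Fin d → ℚ) • F u = 0 := by
      intro u hu
      have : (u : Fin d → ℚ) ∉ s := by
        rintro ⟨i, hi⟩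
        exact hu (Finset.mem_image.2 ⟨i, Finset.mem_univ _, Subtype.ext hi⟩)
      rw [ha'0 _ this, zero_smul]
    have h1 : ∑ u : ext, a' (u : Fin d → ℚ) • F u
        = ∑ u ∈ Finset.univ.image ψ, a' (u : Fin d → ℚ) • F u := by
      symm
      refine Finset.sum_subset (Finset.subset_univ _) ?_
      intro u _ hu; exact himg u hu
    rw [h1, Finset.sum_image (fun i _ i' _ h => hψinj h)]
    have h2 : ∀ i : {i // i ∈ S}, a' ((ψ i : Fin d → ℚ)) • F (ψ i)
        = a (i : Fin n) • toR (v (i : Fin n)) := by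
      intro i
      have : ((ψ i : Fin d → ℚ)) = φ (i : Fin n) := rfl
      rw [this, ha'φ _ i.2]
      congr 1
    rw [Finset.sum_congr rfl fun i _ => h2 i]
    have h3 : ∑ i : {i // i ∈ S}, a (i : Fin n) • toR (v (i : Fin n))
        = ∑ i, a i • toR (v i) := by
      rw [Finset.sum_coe_sort S (fun i => a i • toR (v i))]
      refine Finset.sum_subset (Finset.subset_univ _) ?_
      intro i _ hi
      rw [hsupp i hi, zero_smul]
    rw [h3]
    funext j
    rw [Finset.sum_apply]
    simpa [toR] using (hw j).symm
  have hg : ∀ u : ext, ((c u : ℝ) - a' (u : Fin d → ℚ)) = 0 := by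
    apply Fintype.linearIndependent_iff.1 hFli
    have : ∑ u : ext, ((c u : ℝ) - a' (u : Fin d → ℚ)) • F u
        = ∑ u : ext, ((c u : ℝ)) • F u - ∑ u : ext, a' (u : Fin d → ℚ) • F u := by
      rw [← Finset.sum_sub_distrib]
      refine Finset.sum_congr rfl fun u _ => ?_
      rw [sub_smul]
    rw [this, hsum1, hsum2, sub_self]
  -- define α
  refine ⟨fun i => if h : i ∈ S then c (ψ ⟨i, h⟩) else 0, ?_, ?_⟩
  · intro i
    by_cases h : i ∈ S
    · simp only [dif_pos h]
      have := hg (ψ ⟨i, h⟩)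
      have h2 : a' ((ψ ⟨i, h⟩ : Fin d → ℚ)) = a i := ha'φ i h
      rw [h2] at this
      linarith [this]
    · simp only [dif_neg h]
      rw [hsupp i h]; simp
  · intro j
    have hreal : (w j : ℝ) = ∑ i, (((if h : i ∈ S then c (ψ ⟨i, h⟩) else 0 : ℚ)) : ℝ) * (v i j : ℝ) := by
      rw [hw j]
      refine Finset.sum_congr rfl fun i _ => ?_
      congr 1
      by_cases h : i ∈ S
      · simp only [dif_pos h]
        have := hg (ψ ⟨i, h⟩)
        have h2 : a' ((ψ ⟨i, h⟩ : Fin d → ℚ)) = a i := ha'φ i h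
        rw [h2] at this
        linarith [this]
      · simp only [dif_neg h]
        rw [hsupp i h]; simp
    have : ((w j : ℚ) : ℝ) = ((∑ i, (if h : i ∈ S then c (ψ ⟨i, h⟩) else 0) * (v i j : ℚ) : ℚ) : ℝ) := by
      push_cast
      simpa using hreal
    exact_mod_cast this


/-! ### Canonical representations -/

def CanonRep (v : Fin n → Fin d → ℤ) (𝒮 : Finset (Finset (Fin n)))
    (w : Fin d → ℤ) (α : Fin n → ℚ) : Prop :=
  (∀ i, 0 ≤ α i) ∧ (∃ S ∈ 𝒮, ∀ i ∉ S, α i = 0) ∧ QRep v w α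

lemma CanonRep.mem_suppL {w : Fin d → ℤ} {α : Fin n → ℚ} (h : CanonRep v 𝒮 w α) :
    w ∈ suppL v 𝒮 := by
  obtain ⟨h0, ⟨S, hS, hs⟩, hq⟩ := h
  exact ⟨S, hS, hq.mem_cone h0 hs⟩

/-- Uniqueness of rational representations supported on a common cone. -/
lemma qrep_unique_on (hfan : IsStackyFan v 𝒮) {S : Finset (Fin n)} (hS : S ∈ 𝒮)
    {w : Fin d → ℤ} {α β : Fin n → ℚ} (hαs : ∀ i ∉ S, α i = 0) (hβs : ∀ i ∉ S, β i = 0)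
    (hα : QRep v w α) (hβ : QRep v w β) : α = β := by
  classical
  have hli := hfan.2.2.2.2.1 S hS
  have key : ∀ i : {i // i ∈ S}, ((α (i : Fin n) - β (i : Fin n) : ℚ) : ℝ) = 0 := by
    apply Fintype.linearIndependent_iff.1 hli
    funext j
    rw [Finset.sum_apply, Pi.zero_apply]
    have h1 : ∑ i : {i // i ∈ S}, ((α (i : Fin n) - β (i : Fin n) : ℚ) : ℝ) * (v (i : Fin n) j : ℝ)
        = ∑ i, ((α i - β i : ℚ) : ℝ) * (v i j : ℝ) := by
      rw [Finset.sum_coe_sort S (fun i => ((α i - β i : ℚ) : ℝ) * (v i j : ℝ))]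
      refine Finset.sum_subset (Finset.subset_univ _) ?_
      intro i _ hi
      rw [hαs i hi, hβs i hi]; simp
    have h2 : ∑ i, ((α i - β i : ℚ) : ℝ) * (v i j : ℝ) = 0 := by
      have ha := hα.coords_real j
      have hb := hβ.coords_real j
      push_cast
      have heq : ∑ i, ((α i : ℝ) - (β i : ℝ)) * (v i j : ℝ)
          = ∑ i, (α i : ℝ) * (v i j : ℝ) - ∑ i, (β i : ℝ) * (v i j : ℝ) := by
        rw [← Finset.sum_sub_distrib]
        exact Finset.sum_congr rfl fun i _ => by ring
      rw [heq, ← ha, ← hb, sub_self]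
    calc ∑ i : {i // i ∈ S}, ((α (i:Fin n) - β (i:Fin n) : ℚ) : ℝ) • toR (v (i:Fin n)) j
        = ∑ i : {i // i ∈ S}, ((α (i:Fin n) - β (i:Fin n) : ℚ) : ℝ) * (v (i:Fin n) j : ℝ) := by
          refine Finset.sum_congr rfl fun i _ => ?_
          simp [toR]
      _ = 0 := h1.trans h2
  funext i
  by_cases hi : i ∈ S
  · have := key ⟨i, hi⟩
    have : (α i - β i : ℚ) = 0 := by exact_mod_cast this
    linarith [this]
  · rw [hαs i hi, hβs i hi]

/-- The support of a canonical representation is contained in any cone containing `w`. -/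
lemma canonRep_support (hfan : IsStackyFan v 𝒮) {w : Fin d → ℤ} {α : Fin n → ℚ}
    (h : CanonRep v 𝒮 w α) {S' : Finset (Fin n)} (hS' : S' ∈ 𝒮)
    (hw : toR w ∈ cone v S') : ∀ i ∉ S', α i = 0 := by
  obtain ⟨h0, ⟨S, hS, hs⟩, hq⟩ := h
  have hwS : toR w ∈ cone v S := hq.mem_cone h0 hs
  have hint : toR w ∈ cone v (S ∩ S') := by
    rw [← hfan.2.2.2.2.2 S hS S' hS']
    exact ⟨hwS, hw⟩
  obtain ⟨a, ha0, has, haw⟩ := of_mem_cone hint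
  have hSS' : S ∩ S' ∈ 𝒮 := hfan.2.2.2.1 S hS _ Finset.inter_subset_left
  obtain ⟨γ, hγa, hγq⟩ := exists_rat_rep hfan hSS' has haw
  have hγs : ∀ i ∉ S ∩ S', γ i = 0 := by
    intro i hi
    have : (γ i : ℝ) = 0 := by rw [hγa i]; exact has i hi
    exact_mod_cast this
  have hαγ : α = γ := by
    refine qrep_unique_on hfan hS hs ?_ hq hγq
    intro i hi
    exact hγs i (fun hmem => hi (Finset.mem_of_mem_inter_left hmem))
  intro i hi
  rw [hαγ]
  exact hγs i (fun hmem => hi (Finset.mem_of_mem_inter_right hmem))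

lemma canonRep_unique (hfan : IsStackyFan v 𝒮) {w : Fin d → ℤ} {α β : Fin n → ℚ}
    (hα : CanonRep v 𝒮 w α) (hβ : CanonRep v 𝒮 w β) : α = β := by
  obtain ⟨hα0, ⟨S, hS, hαs⟩, hαq⟩ := hα
  have hwS : toR w ∈ cone v S := hαq.mem_cone hα0 hαs
  have hβs : ∀ i ∉ S, β i = 0 := canonRep_support hfan hβ hS hwS
  exact qrep_unique_on hfan hS hαs hβs hαq hβ.2.2

/-- The canonical representation (via choice). -/
def crep (v : Fin n → Fin d → ℤ) (𝒮 : Finset (Finset (Fin n))) (w : Fin d → ℤ) :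
    Fin n → ℚ :=
  open scoped Classical in
  if h : ∃ α, CanonRep v 𝒮 w α then h.choose else 0

lemma crep_spec {w : Fin d → ℤ} (h : ∃ α, CanonRep v 𝒮 w α) :
    CanonRep v 𝒮 w (crep v 𝒮 w) := by
  rw [crep, dif_pos h]
  exact h.choose_spec

lemma canonRep_of_suppL (hfan : IsStackyFan v 𝒮) {w : Fin d → ℤ} (hw : w ∈ suppL v 𝒮) :
    CanonRep v 𝒮 w (crep v 𝒮 w) := by
  obtain ⟨S, hS, hwS⟩ := hw
  obtain ⟨a, ha0, has, haw⟩ := of_mem_cone hwS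
  obtain ⟨α, hαa, hαq⟩ := exists_rat_rep hfan hS has haw
  refine crep_spec ⟨α, ?_, ⟨S, hS, ?_⟩, hαq⟩
  · intro i
    have : (0:ℝ) ≤ (α i : ℝ) := by rw [hαa i]; exact ha0 i
    exact_mod_cast this
  · intro i hi
    have : (α i : ℝ) = 0 := by rw [hαa i]; exact has i hi
    exact_mod_cast this

lemma crep_eq (hfan : IsStackyFan v 𝒮) {w : Fin d → ℤ} {α : Fin n → ℚ}
    (h : CanonRep v 𝒮 w α) : crep v 𝒮 w = α :=
  canonRep_unique hfan (crep_spec ⟨α, h⟩) h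

/-- addition of canonical reps with common cone -/
lemma crep_add (hfan : IsStackyFan v 𝒮) {w₁ w₂ : Fin d → ℤ} (h₁ : w₁ ∈ suppL v 𝒮)
    (h₂ : w₂ ∈ suppL v 𝒮) {S : Finset (Fin n)} (hS : S ∈ 𝒮)
    (hw₁ : toR w₁ ∈ cone v S) (hw₂ : toR w₂ ∈ cone v S) :
    crep v 𝒮 (w₁ + w₂) = crep v 𝒮 w₁ + crep v 𝒮 w₂ := by
  have hc₁ := canonRep_of_suppL hfan h₁
  have hc₂ := canonRep_of_suppL hfan h₂
  have hs₁ : ∀ i ∉ S, crep v 𝒮 w₁ i = 0 := canonRep_support hfan hc₁ hS hw₁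
  have hs₂ : ∀ i ∉ S, crep v 𝒮 w₂ i = 0 := canonRep_support hfan hc₂ hS hw₂
  refine crep_eq hfan ⟨?_, ⟨S, hS, ?_⟩, ?_⟩
  · intro i
    have := hc₁.1 i
    have := hc₂.1 i
    have : (0:ℚ) ≤ crep v 𝒮 w₁ i + crep v 𝒮 w₂ i := by positivity
    simpa using this
  · intro i hi
    simp [hs₁ i hi, hs₂ i hi]
  · intro j
    have e₁ := hc₁.2.2 j
    have e₂ := hc₂.2.2 j
    have : ((w₁ + w₂) j : ℚ) = (w₁ j : ℚ) + (w₂ j : ℚ) := by push_cast; simp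
    rw [this, e₁, e₂, ← Finset.sum_add_distrib]
    refine Finset.sum_congr rfl fun i _ => ?_
    simp [Pi.add_apply]
    ring

/-- the box point of `w` -/
def bx (v : Fin n → Fin d → ℤ) (𝒮 : Finset (Finset (Fin n))) (w : Fin d → ℤ) :
    Fin d → ℤ :=
  fun j => w j - ∑ i, ⌊crep v 𝒮 w i⌋ * v i j

lemma canonRep_bx (hfan : IsStackyFan v 𝒮) {w : Fin d → ℤ} (hw : w ∈ suppL v 𝒮) :
    CanonRep v 𝒮 (bx v 𝒮 w) (fun i => Int.fract (crep v 𝒮 w i)) := by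
  have hc := canonRep_of_suppL hfan hw
  obtain ⟨h0, ⟨S, hS, hs⟩, hq⟩ := hc
  refine ⟨fun i => Int.fract_nonneg _, ⟨S, hS, ?_⟩, ?_⟩
  · intro i hi
    show Int.fract (crep v 𝒮 w i) = 0
    rw [hs i hi]
    exact Int.fract_zero
  · intro j
    have hb : (bx v 𝒮 w j : ℚ) = (w j : ℚ) - ∑ i, (⌊crep v 𝒮 w i⌋ : ℚ) * (v i j : ℚ) := by
      rw [bx]
      push_cast
      ring
    rw [hb, hq j, ← Finset.sum_sub_distrib]
    refine Finset.sum_congr rfl fun i _ => ?_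
    show _ = Int.fract (crep v 𝒮 w i) * (v i j : ℚ)
    rw [← Int.self_sub_floor]
    ring

lemma bx_mem_Box (hfan : IsStackyFan v 𝒮) {w : Fin d → ℤ} (hw : w ∈ suppL v 𝒮) :
    bx v 𝒮 w ∈ Box v 𝒮 := by
  have hc := canonRep_bx hfan hw
  obtain ⟨h0, ⟨S, hS, hs⟩, hq⟩ := hc
  exact ⟨S, fun i => Int.fract (crep v 𝒮 w i),
    hS, fun i => ⟨Int.fract_nonneg _, Int.fract_lt_one _⟩, hs, hq⟩

lemma bx_mem_suppL (hfan : IsStackyFan v 𝒮) {w : Fin d → ℤ} (hw : w ∈ suppL v 𝒮) :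
    bx v 𝒮 w ∈ suppL v 𝒮 :=
  (canonRep_bx hfan hw).mem_suppL

lemma crep_bx (hfan : IsStackyFan v 𝒮) {w : Fin d → ℤ} (hw : w ∈ suppL v 𝒮) :
    crep v 𝒮 (bx v 𝒮 w) = fun i => Int.fract (crep v 𝒮 w i) :=
  crep_eq hfan (canonRep_bx hfan hw)

/-- box elements: canonical rep is the box rep. -/
lemma box_canonRep {w : Fin d → ℤ} (hw : w ∈ Box v 𝒮) :
    ∃ α, CanonRep v 𝒮 w α ∧ ∀ i, 0 ≤ α i ∧ α i < 1 := by
  obtain ⟨S, α, hS, hb, hs, hq⟩ := hw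
  exact ⟨α, ⟨fun i => (hb i).1, ⟨S, hS, hs⟩, hq⟩, hb⟩

lemma box_mem_suppL {w : Fin d → ℤ} (hw : w ∈ Box v 𝒮) : w ∈ suppL v 𝒮 := by
  obtain ⟨α, hc, _⟩ := box_canonRep hw
  exact hc.mem_suppL

lemma bx_box (hfan : IsStackyFan v 𝒮) {w : Fin d → ℤ} (hw : w ∈ Box v 𝒮) :
    bx v 𝒮 w = w := by
  obtain ⟨α, hc, hb⟩ := box_canonRep hw
  have hcr : crep v 𝒮 w = α := crep_eq hfan hc
  funext j
  rw [bx, hcr]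
  have : ∀ i, ⌊α i⌋ = 0 := by
    intro i
    rw [Int.floor_eq_zero_iff]
    exact ⟨(hb i).1, (hb i).2⟩
  simp [this]

/-- integrality of the canonical representation -/
def IsInt (v : Fin n → Fin d → ℤ) (𝒮 : Finset (Finset (Fin n))) (w : Fin d → ℤ) : Prop :=
  ∀ i, ∃ k : ℕ, crep v 𝒮 w i = k

lemma isInt_add (hfan : IsStackyFan v 𝒮) {w₁ w₂ : Fin d → ℤ} (h₁ : w₁ ∈ suppL v 𝒮)
    (h₂ : w₂ ∈ suppL v 𝒮) {S : Finset (Fin n)} (hS : S ∈ 𝒮)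
    (hw₁ : toR w₁ ∈ cone v S) (hw₂ : toR w₂ ∈ cone v S)
    (hi₁ : IsInt v 𝒮 w₁) (hi₂ : IsInt v 𝒮 w₂) : IsInt v 𝒮 (w₁ + w₂) := by
  intro i
  obtain ⟨k₁, hk₁⟩ := hi₁ i
  obtain ⟨k₂, hk₂⟩ := hi₂ i
  refine ⟨k₁ + k₂, ?_⟩
  rw [crep_add hfan h₁ h₂ hS hw₁ hw₂]
  push_cast
  simp [hk₁, hk₂]

lemma bx_add_isInt (hfan : IsStackyFan v 𝒮) {w₁ w₂ : Fin d → ℤ} (h₁ : w₁ ∈ suppL v 𝒮)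
    (h₂ : w₂ ∈ suppL v 𝒮) {S : Finset (Fin n)} (hS : S ∈ 𝒮)
    (hw₁ : toR w₁ ∈ cone v S) (hw₂ : toR w₂ ∈ cone v S)
    (hi₁ : IsInt v 𝒮 w₁) : bx v 𝒮 (w₁ + w₂) = bx v 𝒮 w₂ := by
  classical
  choose k hk using hi₁
  have hadd := crep_add hfan h₁ h₂ hS hw₁ hw₂
  have hfl : ∀ i, ⌊crep v 𝒮 (w₁ + w₂) i⌋ = (k i : ℤ) + ⌊crep v 𝒮 w₂ i⌋ := by
    intro i
    rw [hadd, Pi.add_apply, hk i]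
    rw [show ((k i : ℚ)) = (((k i : ℤ)) : ℚ) by norm_cast]
    rw [add_comm, Int.floor_add_intCast, add_comm]
  have hw₁k : ∀ j, w₁ j = ∑ i, (k i : ℤ) * v i j := by
    intro j
    have hq := (canonRep_of_suppL hfan h₁).2.2 j
    have : (w₁ j : ℚ) = ((∑ i, (k i : ℤ) * v i j : ℤ) : ℚ) := by
      rw [hq]
      push_cast
      refine Finset.sum_congr rfl fun i _ => ?_
      rw [hk i]
    exact_mod_cast this
  funext j
  rw [bx, bx]
  have hsum : ∑ i, ⌊crep v 𝒮 (w₁ + w₂) i⌋ * v i j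
      = ∑ i, ((k i : ℤ) + ⌊crep v 𝒮 w₂ i⌋) * v i j :=
    Finset.sum_congr rfl fun i _ => by rw [hfl i]
  rw [hsum]
  have : ∑ i, ((k i : ℤ) + ⌊crep v 𝒮 w₂ i⌋) * v i j
      = ∑ i, (k i : ℤ) * v i j + ∑ i, ⌊crep v 𝒮 w₂ i⌋ * v i j := by
    rw [← Finset.sum_add_distrib]
    refine Finset.sum_congr rfl fun i _ => by ring
  rw [this, ← hw₁k j]
  simp [Pi.add_apply]

/-! ### algebra lemmas -/

lemma CanonRep.mem_cone' {w : Fin d → ℤ} {α : Fin n → ℚ} (h : CanonRep v 𝒮 w α)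
    {S : Finset (Fin n)} (hs : ∀ i ∉ S, α i = 0) : toR w ∈ cone v S :=
  h.2.2.mem_cone h.1 hs

lemma vi_mem_cone {S : Finset (Fin n)} {i : Fin n} (hi : i ∈ S) :
    toR (v i) ∈ cone v S := by
  refine mem_cone_of (fun i' => if i' = i then 1 else 0)
    (fun i' => by show (0:ℝ) ≤ if i' = i then 1 else 0; split <;> norm_num)
    (fun i' hi' => by
      have : i' ≠ i := fun h => hi' (h ▸ hi)
      simp [this]) ?_
  intro j
  simp [ite_mul]

lemma canonRep_vi (hfan : IsStackyFan v 𝒮) (i : Fin n) :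
    CanonRep v 𝒮 (v i) (fun i' => if i' = i then 1 else 0) := by
  refine ⟨fun i' => by show (0:ℚ) ≤ if i' = i then 1 else 0; split <;> norm_num,
    ⟨{i}, hfan.2.2.1 i, ?_⟩, ?_⟩
  · intro i' hi'
    have : i' ≠ i := by simpa using hi'
    simp [this]
  · intro j
    have : ∑ i', (if i' = i then (1:ℚ) else 0) * (v i' j : ℚ) = (v i j : ℚ) := by
      simp [ite_mul]
    rw [this]

lemma vi_mem_suppL (hfan : IsStackyFan v 𝒮) (i : Fin n) : v i ∈ suppL v 𝒮 :=
  (canonRep_vi hfan i).mem_suppL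

lemma isInt_vi (hfan : IsStackyFan v 𝒮) (i : Fin n) : IsInt v 𝒮 (v i) := by
  intro i'
  rw [crep_eq hfan (canonRep_vi hfan i)]
  by_cases h : i' = i
  · exact ⟨1, by simp [h]⟩
  · exact ⟨0, by simp [h]⟩

lemma canonRep_zero (hfan : IsStackyFan v 𝒮) : CanonRep v 𝒮 (0 : Fin d → ℤ) 0 := by
  exact ⟨fun i => le_refl 0, ⟨∅, hfan.2.1, fun i _ => rfl⟩, fun j => by simp [QRep]⟩

lemma zero_mem_suppL (hfan : IsStackyFan v 𝒮) : (0 : Fin d → ℤ) ∈ suppL v 𝒮 :=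
  (canonRep_zero hfan).mem_suppL

lemma isInt_zero (hfan : IsStackyFan v 𝒮) : IsInt v 𝒮 (0 : Fin d → ℤ) := by
  intro i
  rw [crep_eq hfan (canonRep_zero hfan)]
  exact ⟨0, by simp⟩

/-- sum of `v i` with natural multiplicities -/
def nSum (v : Fin n → Fin d → ℤ) (m : Fin n → ℕ) : Fin d → ℤ :=
  fun j => ∑ i, (m i : ℤ) * v i j

lemma canonRep_nSum {S : Finset (Fin n)} (hS : S ∈ 𝒮) {m : Fin n → ℕ}
    (hm : ∀ i ∉ S, m i = 0) : CanonRep v 𝒮 (nSum v m) (fun i => (m i : ℚ)) := by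
  refine ⟨fun i => by positivity, ⟨S, hS, fun i hi => by simp [hm i hi]⟩, ?_⟩
  intro j
  show ((∑ i, (m i : ℤ) * v i j : ℤ) : ℚ) = _
  push_cast
  rfl

lemma isInt_nSum (hfan : IsStackyFan v 𝒮) {S : Finset (Fin n)} (hS : S ∈ 𝒮)
    {m : Fin n → ℕ} (hm : ∀ i ∉ S, m i = 0) : IsInt v 𝒮 (nSum v m) := by
  intro i
  rw [crep_eq hfan (canonRep_nSum hS hm)]
  exact ⟨m i, rfl⟩

section PSR

variable {A : Type} [CommRing A] [Algebra ℂ A]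

lemma e_nSum_aux (hfan : IsStackyFan v 𝒮) (D : PSRData v 𝒮 A) {S : Finset (Fin n)}
    (hS : S ∈ 𝒮) :
    ∀ (N : ℕ) (m : Fin n → ℕ), (∀ i ∉ S, m i = 0) → (∑ i, m i = N) →
      D.e (nSum v m) = ∏ i, D.e (v i) ^ m i := by
  intro N
  induction N with
  | zero =>
    intro m hm hsum
    have hm0 : ∀ i, m i = 0 := by
      intro i
      have := Finset.sum_eq_zero_iff.1 hsum i (Finset.mem_univ i)
      exact this
    have : nSum v m = 0 := by
      funext j
      simp [nSum, hm0]
    rw [this, D.one]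
    symm
    refine Finset.prod_eq_one fun i _ => by rw [hm0 i, pow_zero]
  | succ N ih =>
    intro m hm hsum
    have hex : ∃ i0, m i0 ≠ 0 := by
      by_contra h
      push_neg at h
      simp only [h] at hsum
      simp at hsum
    obtain ⟨i0, hi0⟩ := hex
    have hi0S : i0 ∈ S := by
      by_contra h
      exact hi0 (hm i0 h)
    set m' : Fin n → ℕ := Function.update m i0 (m i0 - 1) with hm'
    have hm'i0 : m i0 = m' i0 + 1 := by
      rw [hm', Function.update_self]
      omega
    have hm'ne : ∀ i, i ≠ i0 → m i = m' i := by
      intro i hi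
      rw [hm', Function.update_of_ne hi]
    have hm's : ∀ i ∉ S, m' i = 0 := by
      intro i hi
      have hne : i ≠ i0 := fun h => hi (h ▸ hi0S)
      rw [← hm'ne i hne]
      exact hm i hi
    have hsum' : ∑ i, m' i = N := by
      have h1 : m i0 + ∑ i ∈ Finset.univ.erase i0, m i = ∑ i, m i :=
        Finset.add_sum_erase _ _ (Finset.mem_univ i0)
      have h2 : m' i0 + ∑ i ∈ Finset.univ.erase i0, m' i = ∑ i, m' i :=
        Finset.add_sum_erase _ _ (Finset.mem_univ i0)
      have h3 : ∑ i ∈ Finset.univ.erase i0, m i = ∑ i ∈ Finset.univ.erase i0, m' i :=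
        Finset.sum_congr rfl fun i hi => hm'ne i (Finset.ne_of_mem_erase hi)
      omega
    have hns : nSum v m = nSum v m' + v i0 := by
      funext j
      have h1 : ∑ i, (m i : ℤ) * v i j
          = (m i0 : ℤ) * v i0 j + ∑ i ∈ Finset.univ.erase i0, (m i : ℤ) * v i j :=
        (Finset.add_sum_erase _ _ (Finset.mem_univ i0)).symm
      have h2 : ∑ i, (m' i : ℤ) * v i j
          = (m' i0 : ℤ) * v i0 j + ∑ i ∈ Finset.univ.erase i0, (m' i : ℤ) * v i j :=
        (Finset.add_sum_erase _ _ (Finset.mem_univ i0)).symm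
      have h3 : ∑ i ∈ Finset.univ.erase i0, (m i : ℤ) * v i j
          = ∑ i ∈ Finset.univ.erase i0, (m' i : ℤ) * v i j :=
        Finset.sum_congr rfl fun i hi => by rw [hm'ne i (Finset.ne_of_mem_erase hi)]
      show ∑ i, (m i : ℤ) * v i j = (∑ i, (m' i : ℤ) * v i j) + v i0 j
      rw [h1, h2, h3, hm'i0]
      push_cast
      ring
    have hmem' : nSum v m' ∈ suppL v 𝒮 := (canonRep_nSum hS hm's).mem_suppL
    have hmemv : v i0 ∈ suppL v 𝒮 := vi_mem_suppL hfan i0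
    have hcone' : toR (nSum v m') ∈ cone v S :=
      (canonRep_nSum hS hm's).mem_cone' (fun i hi => by simp [hm's i hi])
    have hconev : toR (v i0) ∈ cone v S := vi_mem_cone hi0S
    have hmul : D.e (nSum v m') * D.e (v i0) = D.e (nSum v m' + v i0) :=
      D.mul_of_cone _ hmem' _ hmemv ⟨S, hS, hcone', hconev⟩
    rw [hns, ← hmul, ih m' hm's hsum']
    have hprod : ∏ i, D.e (v i) ^ m i
        = D.e (v i0) ^ (m' i0 + 1) * ∏ i ∈ Finset.univ.erase i0, D.e (v i) ^ m' i := by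
      rw [← hm'i0]
      rw [← Finset.mul_prod_erase _ _ (Finset.mem_univ i0)]
      congr 1
      refine Finset.prod_congr rfl fun i hi => by
        rw [hm'ne i (Finset.ne_of_mem_erase hi)]
    rw [hprod, pow_succ]
    rw [← Finset.mul_prod_erase Finset.univ (fun i => D.e (v i) ^ m' i) (Finset.mem_univ i0)]
    ring

lemma e_nSum (hfan : IsStackyFan v 𝒮) (D : PSRData v 𝒮 A) {S : Finset (Fin n)}
    (hS : S ∈ 𝒮) {m : Fin n → ℕ} (hm : ∀ i ∉ S, m i = 0) :
    D.e (nSum v m) = ∏ i, D.e (v i) ^ m i :=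
  e_nSum_aux hfan D hS _ m hm rfl

/-- the integer-part multiplicities of `w` -/
def intNat (v : Fin n → Fin d → ℤ) (𝒮 : Finset (Finset (Fin n))) (w : Fin d → ℤ) :
    Fin n → ℕ :=
  fun i => (⌊crep v 𝒮 w i⌋).toNat

lemma e_decomp (hfan : IsStackyFan v 𝒮) (D : PSRData v 𝒮 A) {w : Fin d → ℤ}
    (hw : w ∈ suppL v 𝒮) :
    D.e w = D.e (nSum v (intNat v 𝒮 w)) * D.e (bx v 𝒮 w) := by
  have hc := canonRep_of_suppL hfan hw
  obtain ⟨S, hS, hs⟩ := hc.2.1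
  have htn : ∀ i, ((intNat v 𝒮 w i : ℤ)) = ⌊crep v 𝒮 w i⌋ := by
    intro i
    exact Int.toNat_of_nonneg (Int.floor_nonneg.2 (hc.1 i))
  have hmsupp : ∀ i ∉ S, intNat v 𝒮 w i = 0 := by
    intro i hi
    have : ((intNat v 𝒮 w i : ℤ)) = 0 := by rw [htn i, hs i hi]; simp
    exact_mod_cast this
  have hdec : nSum v (intNat v 𝒮 w) + bx v 𝒮 w = w := by
    funext j
    show (∑ i, (intNat v 𝒮 w i : ℤ) * v i j) + (w j - ∑ i, ⌊crep v 𝒮 w i⌋ * v i j) = w j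
    rw [Finset.sum_congr rfl fun i _ => by rw [htn i]]
    ring
  have hbxc := canonRep_bx hfan hw
  have hbxcone : toR (bx v 𝒮 w) ∈ cone v S := by
    refine hbxc.mem_cone' ?_
    intro i hi
    show Int.fract (crep v 𝒮 w i) = 0
    rw [hs i hi]
    exact Int.fract_zero
  have hmul := D.mul_of_cone _ (canonRep_nSum hS hmsupp).mem_suppL _ hbxc.mem_suppL
    ⟨S, hS, (canonRep_nSum hS hmsupp).mem_cone' (fun i hi => by simp [hmsupp i hi]), hbxcone⟩
  rw [hmul, hdec]

end PSR

/-! ### Main structural lemmas -/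

section Main

variable {A : Type} [CommRing A] [Algebra ℂ A]

lemma add_mem_cone {S : Finset (Fin n)} {w₁ w₂ : Fin d → ℤ}
    (h₁ : toR w₁ ∈ cone v S) (h₂ : toR w₂ ∈ cone v S) : toR (w₁ + w₂) ∈ cone v S := by
  obtain ⟨a, ha0, has, haw⟩ := of_mem_cone h₁
  obtain ⟨c, hc0, hcs, hcw⟩ := of_mem_cone h₂
  refine mem_cone_of (fun i => a i + c i) (fun i => add_nonneg (ha0 i) (hc0 i))
    (fun i hi => by show a i + c i = 0; rw [has i hi, hcs i hi, add_zero]) (fun j => ?_)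
  show ((w₁ j + w₂ j : ℤ) : ℝ) = _
  push_cast
  rw [haw j, hcw j, ← Finset.sum_add_distrib]
  exact Finset.sum_congr rfl fun i _ => by ring

lemma mul_key (hfan : IsStackyFan v 𝒮) (D : PSRData v 𝒮 A) {w₁ w₂ : Fin d → ℤ}
    (h₁ : w₁ ∈ suppL v 𝒮) (h₂ : w₂ ∈ suppL v 𝒮) (hint : IsInt v 𝒮 w₁) :
    D.e w₁ * D.e w₂ = 0 ∨
      (w₁ + w₂ ∈ suppL v 𝒮 ∧ D.e w₁ * D.e w₂ = D.e (w₁ + w₂) ∧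
        bx v 𝒮 (w₁ + w₂) = bx v 𝒮 w₂ ∧ (IsInt v 𝒮 w₂ → IsInt v 𝒮 (w₁ + w₂))) := by
  by_cases hc : ∃ S ∈ 𝒮, toR w₁ ∈ cone v S ∧ toR w₂ ∈ cone v S
  · right
    obtain ⟨S, hS, hc₁, hc₂⟩ := hc
    refine ⟨?_, ?_, ?_, ?_⟩
    · exact ⟨S, hS, add_mem_cone hc₁ hc₂⟩
    · exact D.mul_of_cone _ h₁ _ h₂ ⟨S, hS, hc₁, hc₂⟩
    · exact bx_add_isInt hfan h₁ h₂ hS hc₁ hc₂ hint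
    · exact fun h2i => isInt_add hfan h₁ h₂ hS hc₁ hc₂ hint h2i
  · left
    exact D.mul_of_not_cone _ h₁ _ h₂ hc

lemma sector_span (hfan : IsStackyFan v 𝒮) (D : PSRData v 𝒮 A) :
    (⨆ w ∈ Box v 𝒮, sector v D.e w) = ⊤ := by
  classical
  set I : Ideal A := tIdeal v D.e with hI
  set q : A →ₗ[ℂ] HSR v A D.e := (Ideal.Quotient.mkₐ ℂ I).toLinearMap with hq
  apply top_unique
  have hqsurj : Function.Surjective q := fun y => Ideal.Quotient.mk_surjective y
  have htop : Submodule.span ℂ (⇑q '' (D.e '' suppL v 𝒮)) = ⊤ := by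
    rw [← Submodule.map_span, D.spans, Submodule.map_top, LinearMap.range_eq_top]
    exact hqsurj
  rw [← htop]
  apply Submodule.span_le.2
  intro x hx
  obtain ⟨y, ⟨w, hw, rfl⟩, rfl⟩ := hx
  have hbox : bx v 𝒮 w ∈ Box v 𝒮 := bx_mem_Box hfan hw
  apply Submodule.mem_iSup_of_mem (bx v 𝒮 w)
  apply Submodule.mem_iSup_of_mem hbox
  apply Submodule.subset_span
  refine ⟨Ideal.Quotient.mk I (D.e (nSum v (intNat v 𝒮 w))), ?_, ?_⟩
  · -- untwisted membership
    show Ideal.Quotient.mk I (D.e (nSum v (intNat v 𝒮 w))) ∈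
      Algebra.adjoin ℂ (Set.range fun i : Fin n => Ideal.Quotient.mk (tIdeal v D.e) (D.e (v i)))
    have hc := canonRep_of_suppL hfan hw
    obtain ⟨S, hS, hs⟩ := hc.2.1
    have hmsupp : ∀ i ∉ S, intNat v 𝒮 w i = 0 := by
      intro i hi
      have h1 : ((intNat v 𝒮 w i : ℤ)) = ⌊crep v 𝒮 w i⌋ :=
        Int.toNat_of_nonneg (Int.floor_nonneg.2 (hc.1 i))
      have : ((intNat v 𝒮 w i : ℤ)) = 0 := by rw [h1, hs i hi]; simp
      exact_mod_cast this
    rw [e_nSum hfan D hS hmsupp, map_prod]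
    refine Subalgebra.prod_mem _ fun i _ => ?_
    rw [map_pow]
    have hmem : Ideal.Quotient.mk (tIdeal v D.e) (D.e (v i)) ∈
        Set.range (fun i : Fin n => Ideal.Quotient.mk (tIdeal v D.e) (D.e (v i))) := ⟨i, rfl⟩
    exact pow_mem (Algebra.subset_adjoin hmem) _
  · show q (D.e w) = _
    rw [← map_mul]
    show q (D.e w) = q _
    rw [← e_decomp hfan D hw]

lemma sector_indep (hfan : IsStackyFan v 𝒮) (D : PSRData v 𝒮 A) :
    iSupIndep (fun w : Box v 𝒮 => sector v D.e w) := by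
  classical
  set I : Ideal A := tIdeal v D.e with hI
  set q : A →ₗ[ℂ] HSR v A D.e := (Ideal.Quotient.mkₐ ℂ I).toLinearMap with hq
  have hqmk : ∀ x : A, q x = Ideal.Quotient.mk I x := fun x => rfl
  have hr : ⊤ ≤ Submodule.span ℂ (Set.range fun w : suppL v 𝒮 => D.e ↑w) := by
    rw [← Set.image_eq_range, D.spans]
  set Bs : Module.Basis (suppL v 𝒮) ℂ A := Module.Basis.mk D.indep hr with hBs
  set Tj : Fin d → A := fun j => ∑ i, ((v i j : ℂ)) • D.e (v i) with hTj
  set gset : Set A := {x | ∃ w ∈ suppL v 𝒮, ∃ j : Fin d, x = D.e w * Tj j} with hgset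
  -- the ideal as a ℂ-span
  have hI2 : ∀ x ∈ Submodule.span ℂ gset, x ∈ I := by
    intro x hx
    refine Submodule.span_induction ?_ (Ideal.zero_mem I) (fun a b _ _ ha hb => I.add_mem ha hb)
      (fun r a _ ha => Submodule.smul_of_tower_mem I r ha) hx
    rintro y ⟨w, hw, j, rfl⟩
    exact Ideal.mul_mem_left _ _ (Ideal.subset_span ⟨j, rfl⟩)
  have hI1 : ∀ x ∈ I, x ∈ Submodule.span ℂ gset := by
    intro x hx
    rw [hI, tIdeal] at hx
    have hx' : x ∈ Ideal.span (Set.range Tj) := hx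
    obtain ⟨c, hcx⟩ := Ideal.mem_span_range_iff_exists_fun.1 hx'
    rw [← hcx]
    refine Submodule.sum_mem _ fun j _ => ?_
    have hcj : c j ∈ Submodule.span ℂ (D.e '' suppL v 𝒮) := by rw [D.spans]; trivial
    refine Submodule.span_induction ?_ ?_ ?_ ?_ hcj
    · rintro y ⟨w, hw, rfl⟩
      exact Submodule.subset_span ⟨w, hw, j, rfl⟩
    · rw [zero_mul]; exact Submodule.zero_mem _
    · intro a b _ _ ha hb
      rw [add_mul]; exact Submodule.add_mem _ ha hb
    · intro r a _ ha
      rw [smul_mul_assoc]; exact Submodule.smul_mem _ _ ha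
  -- graded pieces
  set Ab : (Fin d → ℤ) → Submodule ℂ A :=
    fun b0 => Submodule.span ℂ (D.e '' {w | w ∈ suppL v 𝒮 ∧ bx v 𝒮 w = b0}) with hAb
  -- untwisted sector lifts
  set ZS : Submodule ℂ A :=
    Submodule.span ℂ (D.e '' {w | w ∈ suppL v 𝒮 ∧ IsInt v 𝒮 w}) with hZS
  have h1Z : (1 : A) ∈ ZS := by
    rw [← D.one]
    exact Submodule.subset_span ⟨0, ⟨zero_mem_suppL hfan, isInt_zero hfan⟩, rfl⟩
  have hmulZ : ∀ x ∈ ZS, ∀ y ∈ ZS, x * y ∈ ZS := by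
    have hgen : ∀ w₁, (w₁ ∈ suppL v 𝒮 ∧ IsInt v 𝒮 w₁) → ∀ y ∈ ZS, D.e w₁ * y ∈ ZS := by
      rintro w₁ ⟨hw₁, hi₁⟩ y hy
      refine Submodule.span_induction ?_ ?_ ?_ ?_ hy
      · rintro z ⟨w₂, ⟨hw₂, hi₂⟩, rfl⟩
        rcases mul_key hfan D hw₁ hw₂ hi₁ with h0 | ⟨hmem, hmul, _, hii⟩
        · rw [h0]; exact Submodule.zero_mem _
        · rw [hmul]
          exact Submodule.subset_span ⟨w₁ + w₂, ⟨hmem, hii hi₂⟩, rfl⟩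
      · rw [mul_zero]; exact Submodule.zero_mem _
      · intro a b _ _ ha hb
        rw [mul_add]; exact Submodule.add_mem _ ha hb
      · intro r a _ ha
        rw [mul_smul_comm]; exact Submodule.smul_mem _ _ ha
    intro x hx
    refine Submodule.span_induction ?_ ?_ ?_ ?_ hx
    · rintro z ⟨w₁, hw₁, rfl⟩
      exact hgen w₁ hw₁
    · intro y _; rw [zero_mul]; exact Submodule.zero_mem _
    · intro a b _ _ ha hb y hy
      rw [add_mul]; exact Submodule.add_mem _ (ha y hy) (hb y hy)
    · intro r a _ ha y hy
      rw [smul_mul_assoc]; exact Submodule.smul_mem _ _ (ha y hy)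
  set Zsub : Subalgebra ℂ A := Submodule.toSubalgebra ZS h1Z (fun x y hx hy => hmulZ x hx y hy) with hZsub
  have huntw : ∀ u ∈ untwisted v D.e, ∃ a ∈ ZS, Ideal.Quotient.mk I a = u := by
    intro u hu
    rw [untwisted] at hu
    have hrange : (Set.range fun i : Fin n => Ideal.Quotient.mk (tIdeal v D.e) (D.e (v i)))
        = ⇑(Ideal.Quotient.mkₐ ℂ I) '' (Set.range fun i => D.e (v i)) := by
      rw [← Set.range_comp]
      rfl
    rw [hrange, ← AlgHom.map_adjoin] at hu
    obtain ⟨a, ha, rfl⟩ := hu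
    refine ⟨a, ?_, rfl⟩
    have hle : Algebra.adjoin ℂ (Set.range fun i => D.e (v i)) ≤ Zsub := by
      apply Algebra.adjoin_le
      rintro _ ⟨i, rfl⟩
      exact Submodule.subset_span ⟨v i, ⟨vi_mem_suppL hfan i, isInt_vi hfan i⟩, rfl⟩
    exact hle ha
  have hmulAb : ∀ b' : Box v 𝒮, ∀ a ∈ ZS, a * D.e ↑b' ∈ Ab ↑b' := by
    intro b' a ha
    refine Submodule.span_induction ?_ ?_ ?_ ?_ ha
    · rintro z ⟨w, ⟨hw, hiw⟩, rfl⟩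
      rcases mul_key hfan D hw (box_mem_suppL b'.2) hiw with h0 | ⟨hmem, hmul, hbx, _⟩
      · rw [h0]; exact Submodule.zero_mem _
      · rw [hmul]
        refine Submodule.subset_span ⟨w + ↑b', ⟨hmem, ?_⟩, rfl⟩
        rw [hbx, bx_box hfan b'.2]
    · rw [zero_mul]; exact Submodule.zero_mem _
    · intro a₁ a₂ _ _ h₁ h₂
      rw [add_mul]; exact Submodule.add_mem _ h₁ h₂
    · intro r a₁ _ h₁
      rw [smul_mul_assoc]; exact Submodule.smul_mem _ _ h₁
  have hsec : ∀ b' : Box v 𝒮, sector v D.e ↑b' ≤ Submodule.map q (Ab ↑b') := by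
    intro b'
    apply Submodule.span_le.2
    rintro x ⟨u, hu, rfl⟩
    obtain ⟨a, haZ, rfl⟩ := huntw u hu
    exact ⟨a * D.e ↑b', hmulAb b' a haZ, by rw [hqmk, map_mul]⟩
  refine iSupIndep.mono ?_ hsec
  intro b
  rw [Submodule.disjoint_def]
  intro x hxb hxsup
  -- the projection onto the b-graded piece
  set π : A →ₗ[ℂ] A := Bs.constr ℂ
    (fun w : suppL v 𝒮 => if bx v 𝒮 ↑w = (b : Fin d → ℤ) then D.e ↑w else 0) with hπ
  have hπe : ∀ w, (hw : w ∈ suppL v 𝒮) →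
      π (D.e w) = if bx v 𝒮 w = (b : Fin d → ℤ) then D.e w else 0 := by
    intro w hw
    have h1 : D.e w = Bs ⟨w, hw⟩ := (Module.Basis.mk_apply D.indep hr ⟨w, hw⟩).symm
    have h2 := Bs.constr_basis ℂ
      (fun w : suppL v 𝒮 => if bx v 𝒮 ↑w = (b : Fin d → ℤ) then D.e ↑w else 0) ⟨w, hw⟩
    rw [← h1] at h2
    exact h2
  have hπg : ∀ x ∈ Submodule.span ℂ gset, π x ∈ Submodule.span ℂ gset := by
    intro y hy
    refine Submodule.span_induction ?_ ?_ ?_ ?_ hy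
    · rintro z ⟨w, hw, j, rfl⟩
      have hterm : ∀ i : Fin n,
          π (D.e w * D.e (v i)) = if bx v 𝒮 w = (b : Fin d → ℤ) then D.e w * D.e (v i) else 0 := by
        intro i
        rcases mul_key hfan D (vi_mem_suppL hfan i) hw (isInt_vi hfan i) with h0 | ⟨hmem, hmul, hbx, _⟩
        · rw [mul_comm (D.e w) (D.e (v i)), h0, map_zero]
          simp
        · rw [mul_comm (D.e w) (D.e (v i)), hmul, hπe _ hmem, hbx]
      have hexp : D.e w * Tj j = ∑ i, ((v i j : ℂ)) • (D.e w * D.e (v i)) := by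
        rw [hTj, Finset.mul_sum]
        exact Finset.sum_congr rfl fun i _ => (mul_smul_comm _ _ _)
      have hkey : π (D.e w * Tj j)
          = if bx v 𝒮 w = (b : Fin d → ℤ) then D.e w * Tj j else 0 := by
        by_cases h : bx v 𝒮 w = (b : Fin d → ℤ)
        · have h1 : ∀ i : Fin n, π ((v i j : ℂ) • (D.e w * D.e (v i)))
              = (v i j : ℂ) • (D.e w * D.e (v i)) := fun i => by
            rw [map_smul, hterm i, if_pos h]
          rw [if_pos h, hexp, map_sum, Finset.sum_congr rfl fun i _ => h1 i]
        · have h1 : ∀ i : Fin n, π ((v i j : ℂ) • (D.e w * D.e (v i))) = 0 := fun i => by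
            rw [map_smul, hterm i, if_neg h, smul_zero]
          rw [if_neg h, hexp, map_sum, Finset.sum_congr rfl fun i _ => h1 i]
          exact Finset.sum_const_zero
      rw [hkey]
      split_ifs with h
      · exact Submodule.subset_span ⟨w, hw, j, rfl⟩
      · exact Submodule.zero_mem _
    · rw [map_zero]; exact Submodule.zero_mem _
    · intro a₁ a₂ _ _ h₁ h₂
      rw [map_add]; exact Submodule.add_mem _ h₁ h₂
    · intro r a₁ _ h₁
      rw [map_smul]; exact Submodule.smul_mem _ _ h₁
  have hπb : ∀ a ∈ Ab (b : Fin d → ℤ), π a = a := by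
    intro a ha
    refine Submodule.span_induction ?_ ?_ ?_ ?_ ha
    · rintro z ⟨w, ⟨hw, hbw⟩, rfl⟩
      rw [hπe _ hw, if_pos hbw]
    · rw [map_zero]
    · intro a₁ a₂ _ _ h₁ h₂
      rw [map_add, h₁, h₂]
    · intro r a₁ _ h₁
      rw [map_smul, h₁]
  have hCker : (⨆ (j : Box v 𝒮) (_ : j ≠ b), Ab ↑j) ≤ LinearMap.ker π := by
    refine iSup_le fun j => iSup_le fun hne => ?_
    apply Submodule.span_le.2
    rintro _ ⟨w, ⟨hw, hbw⟩, rfl⟩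
    rw [SetLike.mem_coe, LinearMap.mem_ker, hπe _ hw, if_neg]
    rw [hbw]
    exact fun h => hne (Subtype.ext h)
  -- extract preimages
  obtain ⟨a, hab, rfl⟩ := hxb
  have hxsup' : q a ∈ Submodule.map q (⨆ (j : Box v 𝒮) (_ : j ≠ b), Ab ↑j) := by
    have hmap : (⨆ (j : Box v 𝒮) (_ : j ≠ b), Submodule.map q (Ab ↑j))
        = Submodule.map q (⨆ (j : Box v 𝒮) (_ : j ≠ b), Ab ↑j) := by
      simp only [Submodule.map_iSup]
    rw [← hmap]
    exact hxsup
  obtain ⟨c, hc, hqc⟩ := hxsup'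
  have hsubI : a - c ∈ I := by
    have : Ideal.Quotient.mk I (a - c) = 0 := by
      rw [map_sub]
      rw [← hqmk a, ← hqmk c, hqc]
      exact sub_self _
    exact (Ideal.Quotient.eq_zero_iff_mem).1 this
  have hπc : π c = 0 := hCker hc
  have haI : a ∈ I := by
    have h1 : π (a - c) = a := by
      rw [map_sub, hπb a hab, hπc, sub_zero]
    have h2 : π (a - c) ∈ Submodule.span ℂ gset := hπg _ (hI1 _ hsubI)
    rw [h1] at h2
    exact hI2 _ h2
  rw [hqmk]
  exact (Ideal.Quotient.eq_zero_iff_mem).2 haI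

end Main

/-- `H_SR` is the internal direct sum `⊕_{v ∈ Box(Σ)} H_v` of the sectors: the `H_v` span
`H_SR` and are `ℂ`-linearly independent. -/
theorem sector_decomposition
    (d n : ℕ) (hd : 0 < d) (hn : 0 < n)
    (v : Fin n → Fin d → ℤ) (𝒮 : Finset (Finset (Fin n)))
    (hfan : IsStackyFan v 𝒮)
    (A : Type) [CommRing A] [Algebra ℂ A] (D : PSRData v 𝒮 A) :
    (⨆ w ∈ Box v 𝒮, sector v D.e w) = ⊤ ∧
    iSupIndep (fun w : Box v 𝒮 => sector v D.e w) :=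
  ⟨sector_span hfan D, sector_indep hfan D⟩

end ToricStack
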